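/- If a switching class contains a graph Γ₀ with Aut(Γ₀) equal to the automorphism group of the whole switching class, then for every X ⊆ Ω the automorphism group of σ_X(Γ₀) is the stabilizer in Aut(Γ₀) of the partition {X, Ω \ X}. -/

import Mathlib

/-- Seidel switching of a simple graph `Γ` with respect to a set `X` of vertices:
adjacency between `X` and its complement is complemented, adjacency within `X`
or within the complement is unchanged. -/
def switching {Ω : Type*} (X : Set Ω) (Γ : SimpleGraph Ω) : SimpleGraph Ω where
  Adj u v := ((u ∈ X ↔ v ∈ X) ∧ Γ.Adj u v) ∨ (¬(u ∈ X ↔ v ∈ X) ∧ ¬Γ.Adj u v)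
  symm := by
    refine ⟨?_⟩
    intro u v h
    rcases h with ⟨h1, h2⟩ | ⟨h1, h2⟩
    · exact Or.inl ⟨h1.symm, h2.symm⟩
    · exact Or.inr ⟨fun h => h1 h.symm, fun h => h2 h.symm⟩
  loopless := by
    refine ⟨?_⟩
    intro u h
    rcases h with ⟨_, h⟩ | ⟨h, _⟩
    · exact Γ.loopless.irrefl u h
    · exact h Iff.rfl

lemma switching_adj {Ω : Type*} (X : Set Ω) (Γ : SimpleGraph Ω) (u v : Ω) :
    (switching X Γ).Adj u v ↔
      ((u ∈ X ↔ v ∈ X) ∧ Γ.Adj u v) ∨ (¬(u ∈ X ↔ v ∈ X) ∧ ¬Γ.Adj u v) := Iff.rfl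

set_option maxHeartbeats 1000000 in
lemma switch_aux1 (p p' q q' a b : Prop)
    (h : ((p ↔ p') ∧ a ∨ ¬(p ↔ p') ∧ ¬a) ↔ ((q ↔ q') ∧ b ∨ ¬(q ↔ q') ∧ ¬b)) :
    ((¬(p ↔ q) ↔ ¬(p' ↔ q')) ∧ a ∨ ¬(¬(p ↔ q) ↔ ¬(p' ↔ q')) ∧ ¬a) ↔ b := by
  tauto

lemma switch_aux2 (p p' q q' a b : Prop)
    (h : ((p ↔ p') ∧ a ∨ ¬(p ↔ p') ∧ ¬a) ↔ ((q ↔ q') ∧ b ∨ ¬(q ↔ q') ∧ ¬b))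
    (h0 : a ↔ b) : (p ↔ p') ↔ (q ↔ q') := by
  tauto

lemma switch_aux3 (p p' q q' a b : Prop)
    (h0 : a ↔ b) (hq : (p ↔ p') ↔ (q ↔ q')) :
    ((p ↔ p') ∧ a ∨ ¬(p ↔ p') ∧ ¬a) ↔ ((q ↔ q') ∧ b ∨ ¬(q ↔ q') ∧ ¬b) := by
  tauto

theorem stmt11 {Ω : Type*} (Γ₀ : SimpleGraph Ω)
    (hI : {g : Equiv.Perm Ω | ∀ u v, Γ₀.Adj (g u) (g v) ↔ Γ₀.Adj u v} =
      {g : Equiv.Perm Ω | ∃ Y : Set Ω,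
        ∀ u v, (switching Y Γ₀).Adj (g u) (g v) ↔ Γ₀.Adj u v}) (X : Set Ω) :
    {g : Equiv.Perm Ω |
        ∀ u v, (switching X Γ₀).Adj (g u) (g v) ↔ (switching X Γ₀).Adj u v} =
      {g : Equiv.Perm Ω | (∀ u v, Γ₀.Adj (g u) (g v) ↔ Γ₀.Adj u v) ∧
        (g '' X = X ∨ g '' X = Xᶜ)} := by
  ext g
  simp only [Set.mem_setOf_eq]
  constructor
  · intro hg
    have hg0 : ∀ u v, Γ₀.Adj (g u) (g v) ↔ Γ₀.Adj u v := by
      have hmem : g ∈ {g : Equiv.Perm Ω | ∃ Y : Set Ω,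
          ∀ u v, (switching Y Γ₀).Adj (g u) (g v) ↔ Γ₀.Adj u v} := by
        refine ⟨{w | ¬(w ∈ X ↔ g.symm w ∈ X)}, fun u v => ?_⟩
        have h := hg u v
        simp only [switching_adj, Set.mem_setOf_eq, Equiv.symm_apply_apply] at h ⊢
        exact switch_aux1 _ _ _ _ _ _ h
      rw [← hI] at hmem
      exact hmem
    have hpq : ∀ u v, ((g u ∈ X ↔ g v ∈ X) ↔ (u ∈ X ↔ v ∈ X)) := by
      intro u v
      have h := hg u v
      simp only [switching_adj] at h
      exact switch_aux2 _ _ _ _ _ _ h (hg0 u v)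
    refine ⟨hg0, ?_⟩
    by_cases hc : ∀ v, v ∈ X ↔ g v ∈ X
    · left
      ext x
      constructor
      · rintro ⟨v, hv, rfl⟩; exact (hc v).mp hv
      · intro hx
        exact ⟨g.symm x, (hc (g.symm x)).mpr (by simpa using hx), by simp⟩
    · right
      push_neg at hc
      obtain ⟨v₀, hv₀⟩ := hc
      have hc' : ∀ v, v ∈ X ↔ g v ∉ X := by
        intro v
        have h := hpq v v₀
        tauto
      ext x
      simp only [Set.mem_compl_iff]
      constructor
      · rintro ⟨v, hv, rfl⟩; exact (hc' v).mp hv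
      · intro hx
        exact ⟨g.symm x, (hc' (g.symm x)).mpr (by simpa using hx), by simp⟩
  · rintro ⟨hg0, hX⟩ u v
    have hq : (g u ∈ X ↔ g v ∈ X) ↔ (u ∈ X ↔ v ∈ X) := by
      rcases hX with hX | hX
      · have e1 : g u ∈ X ↔ u ∈ X := by
          conv_lhs => rw [← hX]
          exact g.injective.mem_set_image
        have e2 : g v ∈ X ↔ v ∈ X := by
          conv_lhs => rw [← hX]
          exact g.injective.mem_set_image
        tauto
      · have e1 : g u ∈ Xᶜ ↔ u ∈ X := by
          conv_lhs => rw [← hX]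
          exact g.injective.mem_set_image
        have e2 : g v ∈ Xᶜ ↔ v ∈ X := by
          conv_lhs => rw [← hX]
          exact g.injective.mem_set_image
        simp only [Set.mem_compl_iff] at e1 e2
        tauto
    simp only [switching_adj]
    exact switch_aux3 _ _ _ _ _ _ (hg0 u v) hq
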